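/- arXiv:1903.10613 — 2 statements merged into one kernel-verified Lean document; each statement's English description precedes it below -/
import Mathlib

section
/- Let p > 43 be a prime, and suppose v, w ∈ 𝔽_2^p are small vectors such that v, w and ê work together. Then the vector v + w is also small. -/
/-- The cyclic shift operator on `𝔽₂ⁿ` (indexed by `ZMod n`): `(cshift x) i = x (i - 1)`. -/
def cshift {n : ℕ} (x : ZMod n → ZMod 2) : ZMod n → ZMod 2 := fun i => x (i - 1)

/-- The standard dot product over `𝔽₂`. -/
def dot {n : ℕ} [NeZero n] (v x : ZMod n → ZMod 2) : ZMod 2 := ∑ i, v i * x i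

/-- A vector `v ∈ 𝔽₂ⁿ` works if for every `x` some cyclic shift of `x` is orthogonal to `v`. -/
def Works {n : ℕ} [NeZero n] (v : ZMod n → ZMod 2) : Prop :=
  ∀ x : ZMod n → ZMod 2, ∃ k : ℕ, dot v (cshift^[k] x) = 0

/-- Three vectors `u, v, w ∈ 𝔽₂ⁿ` work together if for every `x` there is a single cyclic
shift of `x` orthogonal to all three. -/
def WorkTogether3 {n : ℕ} [NeZero n] (u v w : ZMod n → ZMod 2) : Prop :=
  ∀ x : ZMod n → ZMod 2, ∃ k : ℕ,
    dot u (cshift^[k] x) = 0 ∧ dot v (cshift^[k] x) = 0 ∧ dot w (cshift^[k] x) = 0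

/-- The vector `ê ∈ 𝔽₂ⁿ` with `ê 0 = 0` and `ê i = 1` for `i ≠ 0`. -/
def ehat (n : ℕ) : ZMod n → ZMod 2 := fun i => if i = 0 then 0 else 1

/-- A vector `u ∈ 𝔽₂ᵖ` is small if there is no `i` with `u i = u (-i) = 1`. -/
def IsSmall {n : ℕ} (u : ZMod n → ZMod 2) : Prop :=
  ¬ ∃ i : ZMod n, u i = 1 ∧ u (-i) = 1

/- ### Auxiliary lemmas -/

lemma shift_iter {n : ℕ} [NeZero n] (x : ZMod n → ZMod 2) (k : ℕ) (m : ZMod n) :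
    (cshift^[k] x) m = x (m - (k : ZMod n)) := by
  induction k generalizing m with
  | zero => simp
  | succ j ih =>
      rw [Function.iterate_succ_apply']
      show (cshift^[j] x) (m - 1) = _
      rw [ih]
      congr 1
      push_cast
      ring

lemma dot_indicator {n : ℕ} [NeZero n] (u : ZMod n → ZMod 2) (A : Finset (ZMod n))
    (k : ZMod n) :
    dot u (fun m => if m - k ∈ A then 1 else 0) = ∑ a ∈ A, u (a + k) := by
  classical
  unfold dot
  have h : ∀ i : ZMod n,
      (u i * if i - k ∈ A then (1 : ZMod 2) else 0) = if i - k ∈ A then u i else 0 := by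
    intro i; split <;> simp
  simp only [h]
  rw [← Equiv.sum_comp (Equiv.addRight k) (fun i => if i - k ∈ A then u i else 0)]
  simp only [Equiv.coe_addRight, add_sub_cancel_right]
  rw [Finset.sum_ite_mem, Finset.univ_inter]

lemma zmod2_cases (a : ZMod 2) : a = 0 ∨ a = 1 := by revert a; decide

lemma zmod2_add_eq_zero {a b : ZMod 2} (h : a + b = 0) : a = b := by
  revert h; revert a b; decide

/-- The key instrument: testing the work-together hypothesis against the indicator vector of
a three-element set `{0, y, -x}` with `x + y + z = 0`. -/
lemma tool3 {p : ℕ} [NeZero p] (v w : ZMod p → ZMod 2)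
    (hv0 : v 0 = 0) (hw0 : w 0 = 0)
    (hwork : WorkTogether3 v w (ehat p))
    (x y : ZMod p) (hx : x ≠ 0) (hy : y ≠ 0) (hxy : x + y ≠ 0) :
    (v (-x) = v y ∧ w (-x) = w y) ∨
    (v (-y) = v (-x - y) ∧ w (-y) = w (-x - y)) ∨
    (v (x + y) = v x ∧ w (x + y) = w x) := by
  classical
  set A : Finset (ZMod p) := {0, y, -x} with hA
  obtain ⟨k, hdv, hdw, hde⟩ := hwork (fun m => if m ∈ A then 1 else 0)
  set κ : ZMod p := (k : ZMod p) with hκ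
  have hshift : (cshift^[k] (fun m => if m ∈ A then (1 : ZMod 2) else 0))
      = fun m => if m - κ ∈ A then 1 else 0 := by
    funext m
    rw [shift_iter]
  rw [hshift, dot_indicator] at hdv hdw hde
  have h0y : (0 : ZMod p) ≠ y := fun h => hy h.symm
  have h0x : (0 : ZMod p) ≠ -x := by
    intro h
    exact hx (by rw [← neg_eq_zero, ← h])
  have hyx : y ≠ -x := by
    intro h
    apply hxy
    rw [h]; ring
  have hsum : ∀ u : ZMod p → ZMod 2,
      ∑ a ∈ A, u (a + κ) = u κ + u (y + κ) + u (-x + κ) := by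
    intro u
    rw [hA, Finset.sum_insert (by simp [h0y, h0x]),
      Finset.sum_insert (by simp [hyx]), Finset.sum_singleton, zero_add]
    ring
  rw [hsum] at hdv hdw hde
  -- the ê-equation forces κ ∈ {0, -y, x}
  have hcases : κ = 0 ∨ κ = -y ∨ κ = x := by
    by_contra hcon
    push_neg at hcon
    obtain ⟨hc1, hc2, hc3⟩ := hcon
    have e1 : ehat p κ = 1 := by simp [ehat, hc1]
    have e2 : ehat p (y + κ) = 1 := by
      have : y + κ ≠ 0 := by
        intro h
        exact hc2 (by linear_combination h)
      simp [ehat, this]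
    have e3 : ehat p (-x + κ) = 1 := by
      have : -x + κ ≠ 0 := by
        intro h
        exact hc3 (by linear_combination h)
      simp [ehat, this]
    rw [e1, e2, e3] at hde
    exact absurd hde (by decide)
  rcases hcases with h | h | h
  · left
    rw [h] at hdv hdw
    rw [add_zero, add_zero, hv0, zero_add] at hdv
    rw [add_zero, add_zero, hw0, zero_add] at hdw
    constructor
    · exact (zmod2_add_eq_zero (by linear_combination hdv)).symm
    · exact (zmod2_add_eq_zero (by linear_combination hdw)).symm
  · right; left
    rw [h] at hdv hdw
    have ey : y + -y = 0 := by ring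
    have ex : -x + -y = -x - y := by ring
    rw [ey, ex, hv0] at hdv
    rw [ey, ex, hw0] at hdw
    constructor
    · exact zmod2_add_eq_zero (by linear_combination hdv)
    · exact zmod2_add_eq_zero (by linear_combination hdw)
  · right; right
    rw [h] at hdv hdw
    have ex : -x + x = 0 := by ring
    have ey : y + x = x + y := by ring
    rw [ex, ey, hv0] at hdv
    rw [ex, ey, hw0] at hdw
    constructor
    · exact (zmod2_add_eq_zero (by linear_combination hdv)).symm
    · exact (zmod2_add_eq_zero (by linear_combination hdw)).symm

/-- The main chain-induction argument. If `v i = 1, w i = 0, v (-i) = 0, w (-i) = 1`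
for some `i ≠ 0`, we derive a contradiction. -/
lemma main_contradiction {p : ℕ} [NeZero p] (hp : p.Prime)
    (v w : ZMod p → ZMod 2)
    (hvs : ∀ m, v m = 1 → v (-m) = 0) (hws : ∀ m, w m = 1 → w (-m) = 0)
    (hv0 : v 0 = 0) (hw0 : w 0 = 0)
    (hwork : WorkTogether3 v w (ehat p))
    (i : ZMod p) (hi : i ≠ 0)
    (hvi : v i = 1) (hwi : w i = 0) (hvmi : v (-i) = 0) (hwmi : w (-i) = 1) : False := by
  haveI := Fact.mk hp
  have hp2 : 2 ≤ p := hp.two_le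
  have hcastne : ∀ j : ℕ, 1 ≤ j → j ≤ p - 1 → ((j : ZMod p) ≠ 0) := by
    intro j h1 h2 h
    rw [ZMod.natCast_eq_zero_iff] at h
    have := Nat.le_of_dvd (by omega) h
    omega
  have key : ∀ j : ℕ, 1 ≤ j → j ≤ p - 1 →
      (v ((j : ZMod p) * i) = 1 ∧ w ((j : ZMod p) * i) = 0) ∨
      (v (-((j : ZMod p) * i)) = 0 ∧ w (-((j : ZMod p) * i)) = 1) := by
    intro j
    induction j with
    | zero => omega
    | succ n ih =>
        intro _ h2
        by_cases hn0 : n = 0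
        · subst hn0
          left
          norm_num
          exact ⟨hvi, hwi⟩
        · have hn1 : 1 ≤ n := by omega
          have hn2 : n ≤ p - 1 := by omega
          have hP := ih hn1 hn2
          set J : ZMod p := (n : ZMod p) * i with hJdef
          have hJ : J ≠ 0 := mul_ne_zero (hcastne n hn1 hn2) hi
          have hJi : J + i = ((n + 1 : ℕ) : ZMod p) * i := by push_cast; ring
          have hJine : J + i ≠ 0 := by
            rw [hJi]
            exact mul_ne_zero (hcastne (n + 1) (by omega) (by omega)) hi
          have hgoal1 : ((n + 1 : ℕ) : ZMod p) * i = J + i := hJi.symm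
          rw [hgoal1]
          rcases hP with ⟨hvJ, hwJ⟩ | ⟨hvmJ, hwmJ⟩
          · -- Case 1 : a_n = (1,0).
            have hvnJ : v (-J) = 0 := hvs _ hvJ
            rcases tool3 v w hv0 hw0 hwork J i hJ hi hJine with
              ⟨ha, _⟩ | ⟨ha, hb⟩ | ⟨ha, hb⟩
            · rw [hvnJ, hvi] at ha
              exact absurd ha (by decide)
            · right
              have e : -J - i = -(J + i) := by ring
              rw [e] at ha hb
              exact ⟨by rw [← ha, hvmi], by rw [← hb, hwmi]⟩
            · left
              exact ⟨by rw [ha, hvJ], by rw [hb, hwJ]⟩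
          · -- Case 2 : a_{-n} = (0,1).
            have hwnJ : w J = 0 := by
              have h := hws _ hwmJ
              rwa [neg_neg] at h
            rcases tool3 v w hv0 hw0 hwork (-J) (-i) (neg_ne_zero.mpr hJ)
              (neg_ne_zero.mpr hi) (by rw [← neg_add]; exact neg_ne_zero.mpr hJine) with
              ⟨ha, hb⟩ | ⟨ha, hb⟩ | ⟨ha, hb⟩
            · rw [neg_neg] at hb
              rw [hwnJ, hwmi] at hb
              exact absurd hb (by decide)
            · left
              have e : -(-J) - -i = J + i := by ring
              rw [neg_neg, e] at ha hb
              exact ⟨by rw [← ha, hvi], by rw [← hb, hwi]⟩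
            · right
              have e : -J + -i = -(J + i) := by ring
              rw [e] at ha hb
              exact ⟨by rw [ha, hvmJ], by rw [hb, hwmJ]⟩
  have hfin := key (p - 1) (by omega) le_rfl
  have hc : ((p - 1 : ℕ) : ZMod p) = -1 := by
    have h1 : ((p - 1 : ℕ) : ZMod p) = (p : ZMod p) - 1 := by
      have : (p - 1) + 1 = p := by omega
      calc ((p - 1 : ℕ) : ZMod p) = ((p - 1 : ℕ) : ZMod p) + 1 - 1 := by ring
        _ = (((p - 1) + 1 : ℕ) : ZMod p) - 1 := by push_cast; ring
        _ = (p : ZMod p) - 1 := by rw [this]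
    rw [h1, ZMod.natCast_self]
    ring
  rw [hc] at hfin
  have hneg : (-1 : ZMod p) * i = -i := by ring
  rw [hneg] at hfin
  rcases hfin with ⟨h, _⟩ | ⟨h, _⟩
  · rw [hvmi] at h
    exact absurd h (by decide)
  · rw [neg_neg, hvi] at h
    exact absurd h (by decide)

/-- Let `p > 43` be a prime and suppose `v, w ∈ 𝔽₂ᵖ` are small vectors such that `v`, `w`
and `ê` work together. Then the vector `v + w` is also small. -/
theorem add_small_of_work_together (p : ℕ) [NeZero p] (hp : p.Prime) (hp43 : 43 < p)
    (v w : ZMod p → ZMod 2) (hv : IsSmall v) (hw : IsSmall w)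
    (hwork : WorkTogether3 v w (ehat p)) :
    IsSmall (v + w) := by
  intro hbad
  obtain ⟨i, h1, h2⟩ := hbad
  rw [Pi.add_apply] at h1 h2
  have hvs : ∀ m, v m = 1 → v (-m) = 0 := by
    intro m hm
    rcases zmod2_cases (v (-m)) with h | h
    · exact h
    · exact absurd ⟨m, hm, h⟩ hv
  have hws : ∀ m, w m = 1 → w (-m) = 0 := by
    intro m hm
    rcases zmod2_cases (w (-m)) with h | h
    · exact h
    · exact absurd ⟨m, hm, h⟩ hw
  have hv0 : v 0 = 0 := by
    rcases zmod2_cases (v 0) with h | h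
    · exact h
    · exact absurd ⟨0, h, by rwa [neg_zero]⟩ hv
  have hw0 : w 0 = 0 := by
    rcases zmod2_cases (w 0) with h | h
    · exact h
    · exact absurd ⟨0, h, by rwa [neg_zero]⟩ hw
  have hwork' : WorkTogether3 w v (ehat p) := by
    intro x
    obtain ⟨k, ha, hb, hc⟩ := hwork x
    exact ⟨k, hb, ha, hc⟩
  have hi : i ≠ 0 := by
    intro h
    rw [h, hv0, hw0] at h1
    exact absurd h1 (by decide)
  rcases zmod2_cases (v i) with hvi | hvi <;> rcases zmod2_cases (w i) with hwi | hwi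
  · rw [hvi, hwi] at h1; exact absurd h1 (by decide)
  · -- v i = 0, w i = 1 : use (w, v, i) ; then v (-i) = 1, w (-i) = 0
    have hwmi : w (-i) = 0 := hws _ hwi
    have hvmi : v (-i) = 1 := by
      rcases zmod2_cases (v (-i)) with h | h
      · rw [h, hwmi] at h2; exact absurd h2 (by decide)
      · exact h
    exact main_contradiction hp w v hws hvs hw0 hv0 hwork' i hi hwi hvi hwmi hvmi
  · -- v i = 1, w i = 0 : use (v, w, i)
    have hvmi : v (-i) = 0 := hvs _ hvi
    have hwmi : w (-i) = 1 := by
      rcases zmod2_cases (w (-i)) with h | h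
      · rw [hvmi, h] at h2; exact absurd h2 (by decide)
      · exact h
    exact main_contradiction hp v w hvs hws hv0 hw0 hwork i hi hvi hwi hvmi hwmi
  · rw [hvi, hwi] at h1; exact absurd h1 (by decide)
end

section
/- Let q be an odd prime and let p > q be a prime such that q is a primitive root modulo p (i.e. q generates (ℤ/pℤ)^×). Then h_q(p) = 0; equivalently, no nonzero vector v ∈ 𝔽_q^p works. -/
/-- The cyclic shift operator on `Fⁿ` (indexed by `ZMod n`): `(cshiftF x) i = x (i - 1)`. -/
def cshiftF {n : ℕ} {F : Type*} (x : ZMod n → F) : ZMod n → F := fun i => x (i - 1)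

/-- A subspace `U ≤ Fⁿ` is cyclically covering if every vector of `Fⁿ` has a cyclic shift
lying in `U`, i.e. `⋃ᵢ σⁱ(U) = Fⁿ`. -/
def CyclicallyCoveringF {n : ℕ} {F : Type*} [Field F]
    (U : Submodule F (ZMod n → F)) : Prop :=
  ∀ x : ZMod n → F, ∃ k : ℕ, cshiftF^[k] x ∈ U

/-- `hF F n` is the largest possible codimension of a cyclically covering subspace of `Fⁿ`. -/
noncomputable def hF (F : Type*) [Field F] (n : ℕ) : ℕ :=
  sSup {d : ℕ | ∃ U : Submodule F (ZMod n → F),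
    CyclicallyCoveringF U ∧
    Module.finrank F (ZMod n → F) - Module.finrank F U = d}

/-- A vector `v ∈ Fⁿ` works if for every `x ∈ Fⁿ` some cyclic shift of `x` is orthogonal to
`v` with respect to the standard bilinear dot product. -/
def WorksF {n : ℕ} [NeZero n] {F : Type*} [Field F] (v : ZMod n → F) : Prop :=
  ∀ x : ZMod n → F, ∃ k : ℕ, ∑ i, v i * (cshiftF^[k] x) i = 0

section HFaux
open Polynomial

def cshiftL (n : ℕ) (K : Type*) [Field K] : (ZMod n → K) →ₗ[K] (ZMod n → K) where
  toFun := cshiftF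
  map_add' x y := rfl
  map_smul' c x := rfl
lemma cshiftF_aux_iter {n : ℕ} {K : Type*} (x : ZMod n → K) (k : ℕ) (i : ZMod n) :
    cshiftF^[k] x i = x (i - (k : ZMod n)) := by
  induction k generalizing i with
  | zero => simp
  | succ k ih =>
    rw [Function.iterate_succ_apply']
    show (cshiftF^[k] x) (i - 1) = _
    rw [ih]
    congr 1
    push_cast
    ring
lemma cshiftL_pow_apply {n : ℕ} {K : Type*} [Field K] (k : ℕ) (x : ZMod n → K) (i : ZMod n) :
    ((cshiftL n K) ^ k) x i = x (i - (k : ZMod n)) := by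
  rw [Module.End.pow_apply]
  exact cshiftF_aux_iter x k i

lemma cshiftL_pow_n {n : ℕ} [NeZero n] {K : Type*} [Field K] : (cshiftL n K) ^ n = 1 := by
  refine LinearMap.ext fun x => funext fun i => ?_
  rw [cshiftL_pow_apply]
  simp [ZMod.natCast_self]

lemma cshiftL_pow_mod {n : ℕ} [NeZero n] {K : Type*} [Field K] (k : ℕ) :
    (cshiftL n K) ^ (k % n) = (cshiftL n K) ^ k := by
  conv_rhs => rw [← Nat.div_add_mod k n]
  rw [pow_add, pow_mul, cshiftL_pow_n, one_pow, one_mul]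

lemma pow_mod_of_pow_eq_one {M : Type*} [Monoid M] {r : M} {n : ℕ} (h : r ^ n = 1) (a : ℕ) :
    r ^ (a % n) = r ^ a := by
  conv_rhs => rw [← Nat.div_add_mod a n]
  rw [pow_add, pow_mul, h, one_pow, one_mul]

section EPS
variable (n : ℕ) (K : Type*) [Field K] [NeZero n]

noncomputable def fpolyA : K[X] := X ^ n - 1

lemma fpolyA_ne_zero : fpolyA n K ≠ 0 := by
  have := X_pow_sub_C_ne_zero (Nat.pos_of_ne_zero (NeZero.ne n)) (1 : K)
  simpa [fpolyA] using this

lemma fpolyA_natDegree : (fpolyA n K).natDegree = n := by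
  have : (fpolyA n K) = X ^ n - C 1 := by simp [fpolyA]
  rw [this, natDegree_X_pow_sub_C]

lemma rootA_pow_n : (AdjoinRoot.root (fpolyA n K)) ^ n = 1 := by
  have h0 : AdjoinRoot.mk (fpolyA n K) (fpolyA n K) = 0 := AdjoinRoot.mk_self
  rw [fpolyA, map_sub, map_pow, AdjoinRoot.mk_X, map_one, sub_eq_zero] at h0
  exact h0

noncomputable def polyOfA (x : ZMod n → K) : K[X] := ∑ m : ZMod n, C (x m) * X ^ m.val

noncomputable def epsL : (ZMod n → K) →ₗ[K] AdjoinRoot (fpolyA n K) where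
  toFun x := AdjoinRoot.mk _ (polyOfA n K x)
  map_add' x y := by
    show AdjoinRoot.mk _ (polyOfA n K (x + y)) = AdjoinRoot.mk _ (polyOfA n K x) + AdjoinRoot.mk _ (polyOfA n K y)
    rw [← map_add]
    congr 1
    unfold polyOfA
    rw [← Finset.sum_add_distrib]
    refine Finset.sum_congr rfl fun m _ => ?_
    rw [Pi.add_apply, C_add, add_mul]
  map_smul' c x := by
    show AdjoinRoot.mk _ (polyOfA n K (c • x)) = c • AdjoinRoot.mk _ (polyOfA n K x)
    rw [AdjoinRoot.smul_mk]
    congr 1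
    unfold polyOfA
    rw [Finset.smul_sum]
    refine Finset.sum_congr rfl fun m _ => ?_
    rw [Pi.smul_apply, smul_eq_mul, C_mul, smul_eq_C_mul, mul_assoc]

variable {n K}

lemma epsL_apply (x : ZMod n → K) :
    epsL n K x = ∑ m : ZMod n, x m • (AdjoinRoot.root (fpolyA n K)) ^ m.val := by
  show AdjoinRoot.mk _ (polyOfA n K x) = _
  rw [polyOfA, map_sum]
  refine Finset.sum_congr rfl fun m _ => ?_
  rw [map_mul, map_pow, AdjoinRoot.mk_X, AdjoinRoot.mk_C, Algebra.smul_def]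
  rfl

lemma epsL_mk (x : ZMod n → K) : epsL n K x = AdjoinRoot.mk _ (polyOfA n K x) := rfl

def finZModEquivA : Fin n ≃ ZMod n where
  toFun i := ((i : ℕ) : ZMod n)
  invFun m := ⟨m.val, m.val_lt⟩
  left_inv i := by
    ext
    simp [ZMod.val_natCast, Nat.mod_eq_of_lt i.isLt]
  right_inv m := ZMod.natCast_rightInverse m

lemma epsL_injective : Function.Injective (epsL n K) := by
  have hf := fpolyA_ne_zero n K
  set pb := AdjoinRoot.powerBasis hf with hpb
  have hdim : pb.dim = n := by rw [hpb, AdjoinRoot.powerBasis_dim, fpolyA_natDegree]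
  set e : Fin pb.dim ≃ ZMod n := (finCongr hdim).trans (finZModEquivA) with he
  set b := pb.basis.reindex e with hb
  have hbm : ∀ m : ZMod n, b m = (AdjoinRoot.root (fpolyA n K)) ^ m.val := by
    intro m
    rw [hb, Module.Basis.reindex_apply, pb.coe_basis]
    have hgen : pb.gen = AdjoinRoot.root (fpolyA n K) := AdjoinRoot.powerBasis_gen hf
    rw [hgen]
    have hval : ((e.symm m : Fin pb.dim) : ℕ) = m.val := by
      rw [he]
      simp [finZModEquivA, finCongr]
    simp only [hval]
  have key : ∀ x, epsL n K x = b.equivFun.symm x := by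
    intro x
    rw [Module.Basis.equivFun_symm_apply, epsL_apply]
    exact Finset.sum_congr rfl fun m _ => by rw [hbm]
  intro x y hxy
  rw [key, key] at hxy
  exact b.equivFun.symm.injective hxy

lemma epsL_shift (x : ZMod n → K) (hn : 1 < n) :
    epsL n K ((cshiftL n K) x) = AdjoinRoot.root (fpolyA n K) * epsL n K x := by
  rw [epsL_apply, epsL_apply, Finset.mul_sum]
  rw [← Equiv.sum_comp (Equiv.addRight (1 : ZMod n))]
  refine Finset.sum_congr rfl fun j _ => ?_
  have h1 : ((cshiftL n K) x) (j + 1) = x j := by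
    show x (j + 1 - 1) = x j
    rw [add_sub_cancel_right]
  rw [Equiv.coe_addRight, h1, mul_smul_comm]
  congr 1
  have hval : (j + 1).val = (j.val + 1) % n := by
    rw [ZMod.val_add, ZMod.val_one_eq_one_mod, Nat.mod_eq_of_lt hn]
  rw [hval, pow_mod_of_pow_eq_one (rootA_pow_n n K), pow_succ']

lemma epsL_pow (hn : 1 < n) (k : ℕ) (x : ZMod n → K) :
    epsL n K (((cshiftL n K) ^ k) x) = (AdjoinRoot.root (fpolyA n K)) ^ k * epsL n K x := by
  induction k with
  | zero => simp
  | succ k ih =>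
    rw [pow_succ', Module.End.mul_apply, epsL_shift _ hn, ih, pow_succ']
    ring

lemma epsL_aeval (hn : 1 < n) (h : K[X]) (x : ZMod n → K) :
    epsL n K ((aeval (cshiftL n K) h) x) = AdjoinRoot.mk (fpolyA n K) h * epsL n K x := by
  rw [aeval_eq_sum_range (x := cshiftL n K), LinearMap.sum_apply, map_sum]
  have hterm : ∀ i ∈ Finset.range (h.natDegree + 1),
      epsL n K ((h.coeff i • (cshiftL n K) ^ i) x)
        = (h.coeff i • (AdjoinRoot.root (fpolyA n K)) ^ i) * epsL n K x := by
    intro i _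
    rw [LinearMap.smul_apply, map_smul, epsL_pow hn, smul_mul_assoc]
  rw [Finset.sum_congr rfl hterm, ← Finset.sum_mul]
  congr 1
  rw [← AdjoinRoot.aeval_eq, aeval_eq_sum_range]

lemma aeval_mem_span (h : K[X]) (v : ZMod n → K) :
    (aeval (cshiftL n K) h) v ∈
      Submodule.span K (Set.range fun m : ZMod n => ((cshiftL n K) ^ m.val) v) := by
  rw [aeval_eq_sum_range (x := cshiftL n K)]
  rw [LinearMap.sum_apply]
  refine Submodule.sum_mem _ fun i _ => ?_
  rw [LinearMap.smul_apply]
  refine Submodule.smul_mem _ _ (Submodule.subset_span ⟨((i : ZMod n)), ?_⟩)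
  show ((cshiftL n K) ^ (((i : ZMod n)).val)) v = ((cshiftL n K) ^ i) v
  rw [ZMod.val_natCast, cshiftL_pow_mod]


lemma cyclotomic_irreducible_zmod_aux (q p : ℕ) [Fact q.Prime] (hp : p.Prime) (hqp : q < p)
    (hroot : orderOf ((q : ZMod p)) = p - 1) : Irreducible (cyclotomic p (ZMod q)) := by
  haveI : Fact p.Prime := ⟨hp⟩
  haveI : NeZero p := ⟨hp.ne_zero⟩
  set F := ZMod q
  have hgne : (cyclotomic p F) ≠ 0 := cyclotomic_ne_zero p F
  have hdeg : (cyclotomic p F).natDegree = p - 1 := by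
    rw [natDegree_cyclotomic, Nat.totient_prime hp]
  have hqnp : ((p : ℕ) : F) ≠ 0 := by
    rw [Ne, ZMod.natCast_eq_zero_iff]
    intro hdvd
    have := (Nat.prime_dvd_prime_iff_eq Fact.out hp).1 hdvd
    omega
  have hp2 : 2 ≤ p := hp.two_le
  obtain ⟨h, hmonic, hirr, hdvd⟩ := (cyclotomic p F).exists_monic_irreducible_factor
    (not_isUnit_of_natDegree_pos _ (by omega))
  obtain ⟨c, hc⟩ := hdvd
  have hne : h ≠ 0 := hirr.ne_zero
  have hd1 : 0 < h.natDegree := hirr.natDegree_pos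
  haveI := Fact.mk hirr
  haveI : Module.Finite F (AdjoinRoot h) := Module.Finite.of_basis (AdjoinRoot.powerBasis hne).basis
  haveI : Finite (AdjoinRoot h) := Module.finite_of_finite F
  haveI : Fintype (AdjoinRoot h) := Fintype.ofFinite _
  set ζ := AdjoinRoot.root h with hζ
  have hζp : ζ ^ p = 1 := by
    have hgf : cyclotomic p F ∣ (X ^ p - 1 : F[X]) :=
      ⟨X - 1, (cyclotomic_prime_mul_X_sub_one F p).symm⟩
    have h0 : AdjoinRoot.mk h (X ^ p - 1 : F[X]) = 0 :=
      AdjoinRoot.mk_eq_zero.2 ((Dvd.intro c hc.symm).trans hgf)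
    rw [map_sub, map_pow, AdjoinRoot.mk_X, map_one, sub_eq_zero] at h0
    exact h0
  have hζ1 : ζ ≠ 1 := by
    intro h1
    have h10 : Polynomial.eval 1 h = 0 := by
      have : aeval ζ h = 0 := by rw [AdjoinRoot.aeval_eq, AdjoinRoot.mk_self]
      rw [h1, aeval_def, eval₂_at_one] at this
      exact (algebraMap F (AdjoinRoot h)).injective (by simpa using this)
    have : Polynomial.eval 1 (cyclotomic p F) = 0 := by rw [hc, eval_mul, h10, zero_mul]
    rw [eval_one_cyclotomic_prime] at this
    exact hqnp this
  have hζne0 : ζ ≠ 0 := by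
    intro h0
    rw [h0, zero_pow hp.ne_zero] at hζp
    exact zero_ne_one hζp
  have hcard : Fintype.card (AdjoinRoot h) = q ^ h.natDegree := by
    rw [Module.card_eq_pow_finrank (K := F), ZMod.card, (AdjoinRoot.powerBasis hne).finrank, AdjoinRoot.powerBasis_dim]
  have hpdvd : p ∣ q ^ h.natDegree - 1 := by
    have hord : orderOf ζ = p := by
      rcases hp.eq_one_or_self_of_dvd _ (orderOf_dvd_of_pow_eq_one hζp) with h1 | h1
      · exact absurd (orderOf_eq_one_iff.1 h1) hζ1
      · exact h1
    have h2 : orderOf (Units.mk0 ζ hζne0) ∣ Fintype.card (AdjoinRoot h)ˣ := orderOf_dvd_card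
    rw [← orderOf_units, Units.val_mk0, hord, Fintype.card_units, hcard] at h2
    exact h2
  have hqd : ((q : ZMod p)) ^ h.natDegree = 1 := by
    have h1 : (1:ℕ) ≤ q ^ h.natDegree := Nat.one_le_pow _ _ (Fact.out (p := q.Prime)).pos
    have h2 : (((q ^ h.natDegree - 1 : ℕ)) : ZMod p) = 0 :=
      (ZMod.natCast_eq_zero_iff _ p).2 hpdvd
    rw [Nat.cast_sub h1, Nat.cast_pow, Nat.cast_one, sub_eq_zero] at h2
    exact h2
  have hdge : p - 1 ≤ h.natDegree :=
    Nat.le_of_dvd hd1 (hroot ▸ orderOf_dvd_of_pow_eq_one hqd)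
  have hdle : h.natDegree ≤ p - 1 := hdeg ▸ natDegree_le_of_dvd (Dvd.intro c hc.symm) hgne
  have hcne : c ≠ 0 := by rintro rfl; rw [mul_zero] at hc; exact hgne hc
  have hcdeg : c.natDegree = 0 := by
    have h3 := natDegree_mul hne hcne
    rw [← hc, hdeg] at h3
    omega
  have hcunit : IsUnit c := by
    rw [eq_C_of_natDegree_eq_zero hcdeg] at hc ⊢
    refine isUnit_C.2 (isUnit_iff_ne_zero.2 fun h0 => ?_)
    rw [h0, map_zero, mul_zero] at hc
    exact hgne hc
  exact (Associated.irreducible ⟨hcunit.unit, by rw [IsUnit.unit_spec, ← hc]⟩ hirr)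

lemma exists_allnz_sumzero (q p : ℕ) [Fact q.Prime] (hq : Odd q) (hp : p.Prime) [NeZero p] :
    ∃ t : ZMod p → ZMod q, (∀ k, t k ≠ 0) ∧ ∑ m, t m = 0 := by
  haveI : Fact (1 < p) := ⟨hp.one_lt⟩
  have h2q : (2 : ZMod q) ≠ 0 := by
    rw [Ne, show (2 : ZMod q) = ((2:ℕ) : ZMod q) by norm_cast, ZMod.natCast_eq_zero_iff]
    intro h2
    have hq2 := (Nat.prime_dvd_prime_iff_eq Fact.out Nat.prime_two).1 h2
    rw [hq2] at hq
    have := Nat.odd_iff.1 hq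
    omega
  have hp2 : 2 ≤ p := hp.two_le
  have hcards : ((Finset.univ : Finset (ZMod p)) \ {0}).card = p - 1 := by
    rw [Finset.card_sdiff_of_subset (Finset.subset_univ _), Finset.card_univ, ZMod.card,
      Finset.card_singleton]
  by_cases hp1 : ((p : ZMod q) - 1) = 0
  · refine ⟨Function.update (Function.update (fun _ => (1 : ZMod q)) 1 2) 0 (-1), ?_, ?_⟩
    · intro k
      rcases eq_or_ne k 0 with rfl | hk0
      · simp [Function.update]
      rcases eq_or_ne k 1 with rfl | hk1
      · simp [Function.update, h2q]
      · simp [Function.update, hk0, hk1]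
    · have h10 : (1 : ZMod p) ∈ (Finset.univ : Finset (ZMod p)) \ {0} := by
        simp [Finset.mem_sdiff, one_ne_zero]
      rw [Finset.sum_update_of_mem (Finset.mem_univ _), Finset.sum_update_of_mem h10]
      have hcc : (((Finset.univ : Finset (ZMod p)) \ {0}) \ {1}).card = p - 2 := by
        rw [Finset.card_sdiff_of_subset (by simpa using h10), hcards, Finset.card_singleton]
        omega
      rw [Finset.sum_const, hcc, nsmul_eq_mul, mul_one]
      have hcast : ((p - 2 : ℕ) : ZMod q) = (p : ZMod q) - 2 := by
        push_cast [Nat.cast_sub hp2]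
        ring
      rw [hcast]
      linear_combination hp1
  · refine ⟨Function.update (fun _ => (1 : ZMod q)) 0 (-((p : ZMod q) - 1)), ?_, ?_⟩
    · intro k
      rcases eq_or_ne k 0 with rfl | hk0
      · have := neg_ne_zero.2 hp1
        simpa using this
      · simp [Function.update, hk0]
    · rw [Finset.sum_update_of_mem (Finset.mem_univ _), Finset.sum_const, hcards,
        nsmul_eq_mul, mul_one]
      have hcast : ((p - 1 : ℕ) : ZMod q) = (p : ZMod q) - 1 := by
        push_cast [Nat.cast_sub (by omega : 1 ≤ p)]
        ring
      rw [hcast]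
      ring

lemma polyOfA_one {n : ℕ} [NeZero n] {K : Type*} [Field K] :
    polyOfA n K (fun _ => (1 : K)) = ∑ i ∈ Finset.range n, (X : K[X]) ^ i := by
  unfold polyOfA
  simp only [map_one, one_mul]
  rw [← Fin.sum_univ_eq_sum_range]
  refine (Fintype.sum_equiv (finZModEquivA (n := n)) _ _ fun i => ?_).symm
  congr 1
  show (i : ℕ) = (((i : ℕ) : ZMod n)).val
  rw [ZMod.val_natCast, Nat.mod_eq_of_lt i.isLt]

lemma eval_one_polyOfA {n : ℕ} [NeZero n] {K : Type*} [Field K] (t : ZMod n → K) :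
    Polynomial.eval 1 (polyOfA n K t) = ∑ m, t m := by
  unfold polyOfA
  rw [eval_finset_sum]
  refine Finset.sum_congr rfl fun m _ => ?_
  rw [eval_mul, eval_C, eval_pow, eval_X, one_pow, mul_one]

lemma exists_target (q p : ℕ) [Fact q.Prime] (hq : Odd q) (hp : p.Prime) [NeZero p]
    (hqp : q < p) (hroot : orderOf ((q : ZMod p)) = p - 1)
    (v : ZMod p → ZMod q) (hv : v ≠ 0) :
    ∃ t : ZMod p → ZMod q, (∀ k, t k ≠ 0) ∧
      ∃ b : (ZMod q)[X], (aeval (cshiftL p (ZMod q)) b) v = t := by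
  haveI : Fact p.Prime := ⟨hp⟩
  have hn2 : 1 < p := hp.one_lt
  set g : (ZMod q)[X] := cyclotomic p (ZMod q) with hgdef
  have girr : Irreducible g := cyclotomic_irreducible_zmod_aux q p hp hqp hroot
  have xirr : Irreducible (X - 1 : (ZMod q)[X]) := by
    have := irreducible_X_sub_C (1 : (ZMod q))
    simpa using this
  have hfa : g * (X - 1) = fpolyA p (ZMod q) := by
    rw [hgdef, cyclotomic_prime_mul_X_sub_one]
    rfl
  set P : (ZMod q)[X] := polyOfA p (ZMod q) v with hPdef
  have hP : ¬ (fpolyA p (ZMod q) ∣ P) := by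
    intro hdvd
    apply hv
    apply epsL_injective (n := p) (K := (ZMod q))
    rw [epsL_mk, map_zero, AdjoinRoot.mk_eq_zero]
    · exact hdvd
  -- key conversion
  have key : ∀ (b : (ZMod q)[X]) (t : ZMod p → (ZMod q)),
      AdjoinRoot.mk (fpolyA p (ZMod q)) (b * P) = AdjoinRoot.mk (fpolyA p (ZMod q)) (polyOfA p (ZMod q) t) →
      (aeval (cshiftL p (ZMod q)) b) v = t := by
    intro b t hbt
    apply epsL_injective (n := p) (K := (ZMod q))
    rw [epsL_aeval hn2, epsL_mk, epsL_mk, ← map_mul, hbt]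
  have honev : ∀ k : ZMod p, (fun _ => (1:(ZMod q))) k ≠ 0 := fun k => one_ne_zero
  have hone : polyOfA p (ZMod q) (fun _ => (1:(ZMod q))) = g := by
    rw [polyOfA_one, hgdef, cyclotomic_prime]
  by_cases hg : g ∣ P
  · -- case 2 : P = g * s
    obtain ⟨s, hs⟩ := hg
    have hxs : ¬ (X - 1 : (ZMod q)[X]) ∣ s := by
      intro hd
      obtain ⟨c, hcc⟩ := hd
      exact hP ⟨c, by rw [hs, hcc, ← hfa]; ring⟩
    obtain ⟨a, b, hab⟩ := xirr.coprime_iff_not_dvd.2 hxs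
    refine ⟨fun _ => 1, honev, b, key b _ ?_⟩
    rw [hone]
    have hpoly : b * P = g - a * (g * (X - 1)) := by linear_combination g * hab + b * hs
    rw [hpoly, hfa, map_sub, map_mul, AdjoinRoot.mk_self, mul_zero, sub_zero]
  · by_cases hx : (X - 1 : (ZMod q)[X]) ∣ P
    · -- case 3 : P = (X-1) * s
      obtain ⟨s, hs⟩ := hx
      have hgs : ¬ g ∣ s := by
        intro hd
        obtain ⟨c, hcc⟩ := hd
        exact hP ⟨c, by rw [hs, hcc, ← hfa]; ring⟩
      obtain ⟨a, b, hab⟩ := girr.coprime_iff_not_dvd.2 hgs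
      obtain ⟨t, htnz, htsum⟩ := exists_allnz_sumzero q p hq hp
      have htd : (X - 1 : (ZMod q)[X]) ∣ polyOfA p (ZMod q) t := by
        have : (X - C (1:(ZMod q))) ∣ polyOfA p (ZMod q) t := by
          rw [dvd_iff_isRoot, IsRoot, eval_one_polyOfA, htsum]
        simpa using this
      obtain ⟨c, hct⟩ := htd
      refine ⟨t, htnz, b * c, key (b * c) t ?_⟩
      have hpoly : (b * c) * P = polyOfA p (ZMod q) t - (a * c) * (g * (X - 1)) := by
        linear_combination (b*c) * hs + (c*(X-1)) * hab - hct
      rw [hpoly, hfa, map_sub, map_mul, AdjoinRoot.mk_self, mul_zero, sub_zero]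
    · -- case 1 : coprime
      have cf : IsCoprime (g * (X - 1) : (ZMod q)[X]) P :=
        IsCoprime.mul_left (girr.coprime_iff_not_dvd.2 hg) (xirr.coprime_iff_not_dvd.2 hx)
      obtain ⟨a, b, hab⟩ := cf
      refine ⟨fun _ => 1, honev, g * b, key (g * b) _ ?_⟩
      rw [hone]
      have hpoly : (g * b) * P = g - (a * g) * (g * (X - 1)) := by linear_combination g * hab
      rw [hpoly, hfa, map_sub, map_mul, AdjoinRoot.mk_self, mul_zero, sub_zero]

lemma not_worksF (q p : ℕ) [Fact q.Prime] (hq : Odd q) (hp : p.Prime) [NeZero p]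
    (hqp : q < p) (hroot : orderOf ((q : ZMod p)) = p - 1)
    (v : ZMod p → ZMod q) (hv : v ≠ 0) : ¬ WorksF v := by
  intro hw
  obtain ⟨t, htnz, b, hb⟩ := exists_target q p hq hp hqp hroot v hv
  have hmem : t ∈ Submodule.span (ZMod q)
      (Set.range fun m : ZMod p => ((cshiftL p (ZMod q)) ^ m.val) v) := by
    rw [← hb]; exact aeval_mem_span b v
  obtain ⟨a, ha⟩ := (Submodule.mem_span_range_iff_exists_fun _).1 hmem
  obtain ⟨k, hk⟩ := hw (fun j => a (-j))
  apply htnz ((k : ZMod p))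
  have h1 : t ((k : ZMod p)) = ∑ m : ZMod p, a m * v ((k : ZMod p) - m) := by
    rw [← ha, Finset.sum_apply]
    refine Finset.sum_congr rfl fun m _ => ?_
    rw [Pi.smul_apply, smul_eq_mul, cshiftL_pow_apply]
    congr 2
    exact congrArg _ (ZMod.natCast_rightInverse m)
  have h2 : ∑ i, v i * ((cshiftF)^[k] (fun j => a (-j))) i
      = ∑ m : ZMod p, a m * v ((k : ZMod p) - m) := by
    rw [← Equiv.sum_comp (Equiv.subLeft ((k : ZMod p)))
      (fun i => v i * ((cshiftF)^[k] (fun j => a (-j))) i)]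
    refine Finset.sum_congr rfl fun m _ => ?_
    simp only [Equiv.subLeft_apply, cshiftF_aux_iter]
    have h3 : -((k : ZMod p) - m - (k : ZMod p)) = m := by ring
    rw [h3, mul_comm]
  rw [h1, ← h2, hk]


end EPS
end HFaux

/-- Let `q` be an odd prime and `p > q` a prime such that `q` is a primitive root modulo
`p`. Then `h_q(p) = 0`; equivalently, no nonzero vector `v ∈ 𝔽_qᵖ` works. -/
theorem hF_eq_zero_of_primitive_root (q p : ℕ) [Fact q.Prime] (hq : Odd q)
    (hp : p.Prime) [NeZero p] (hqp : q < p)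
    (hroot : orderOf ((q : ZMod p)) = p - 1) :
    hF (ZMod q) p = 0 ∧ ∀ v : ZMod p → ZMod q, v ≠ 0 → ¬ WorksF v := by
  have part2 : ∀ v : ZMod p → ZMod q, v ≠ 0 → ¬ WorksF v :=
    fun v hv => not_worksF q p hq hp hqp hroot v hv
  refine ⟨?_, part2⟩
  have hzero_mem : (0:ℕ) ∈ {d : ℕ | ∃ U : Submodule (ZMod q) (ZMod p → ZMod q),
      CyclicallyCoveringF U ∧
      Module.finrank (ZMod q) (ZMod p → ZMod q) - Module.finrank (ZMod q) U = d} := by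
    refine ⟨⊤, fun x => ⟨0, Submodule.mem_top⟩, ?_⟩
    rw [finrank_top]
    omega
  have hall : ∀ d ∈ {d : ℕ | ∃ U : Submodule (ZMod q) (ZMod p → ZMod q),
      CyclicallyCoveringF U ∧
      Module.finrank (ZMod q) (ZMod p → ZMod q) - Module.finrank (ZMod q) U = d}, d = 0 := by
    rintro d ⟨U, hcov, hd⟩
    have hU : U = ⊤ := by
      by_contra hne
      obtain ⟨φ, hφne, hφmap⟩ :=
        Submodule.exists_dual_map_eq_bot_of_lt_top (lt_top_iff_ne_top.2 hne) inferInstance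
      obtain ⟨v, hvdef⟩ : ∃ v : ZMod p → ZMod q, v = fun i => φ (Pi.single i 1) := ⟨_, rfl⟩
      have hφx : ∀ x : ZMod p → ZMod q, φ x = ∑ i, x i * v i := by
        intro x
        conv_lhs => rw [pi_eq_sum_univ x]
        rw [map_sum]
        refine Finset.sum_congr rfl fun i _ => ?_
        rw [map_smul, smul_eq_mul]
        congr 1
        rw [hvdef]
        congr 1
        funext j
        rw [Pi.single_apply]
        exact if_congr eq_comm rfl rfl
      have hworks : WorksF v := by
        intro x
        obtain ⟨k, hk⟩ := hcov x
        refine ⟨k, ?_⟩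
        have h0 : φ (cshiftF^[k] x) = 0 := by
          have hmem2 : φ (cshiftF^[k] x) ∈ Submodule.map φ U := Submodule.mem_map_of_mem hk
          rw [hφmap] at hmem2
          simpa using hmem2
        rw [← h0, hφx]
        exact Finset.sum_congr rfl fun i _ => mul_comm _ _
      have hvne : v ≠ 0 := by
        intro h0
        apply hφne
        refine LinearMap.ext fun x => ?_
        rw [hφx x, h0]
        simp
      exact part2 v hvne hworks
    rw [hU, finrank_top] at hd
    omega
  show sSup _ = 0
  refine le_antisymm (csSup_le ⟨0, hzero_mem⟩ fun d hd => (hall d hd).le) (Nat.zero_le _)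
end
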